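/- arXiv:2512.01386 — 2 statements merged into one kernel-verified Lean document; each statement's English description precedes it below -/
import Mathlib

section
/- For θ ∈ [0, π/2] and fixed 0 ≤ ε < 1, the function h(θ) = (cos θ + ε)/√(1 + 2ε cos θ + ε²) − cos θ is 0 at θ = 0 and attains its maximum on [0, π/2] at θ = π/2, where h(π/2) = ε/√(1 + ε²). -/
open Real

theorem tangential_motion_worst_case
    (ε : ℝ) (hε0 : 0 ≤ ε) (hε1 : ε < 1) :
    let h : ℝ → ℝ := fun θ =>
      (Real.cos θ + ε) / Real.sqrt (1 + 2*ε*Real.cos θ + ε^2) - Real.cos θ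
    h 0 = 0 ∧
    (∀ θ ∈ Set.Icc (0:ℝ) (Real.pi/2), h θ ≤ h (Real.pi/2)) ∧
    h (Real.pi/2) = ε / Real.sqrt (1 + ε^2) := by
  intro h
  have ht0 : (0:ℝ) < 1 + ε^2 := by positivity
  have htpos : 0 < Real.sqrt (1 + ε^2) := Real.sqrt_pos.mpr ht0
  have ht1 : 1 ≤ Real.sqrt (1 + ε^2) := by
    nlinarith [Real.sq_sqrt ht0.le, Real.sqrt_nonneg (1+ε^2)]
  have hpi2 : h (Real.pi/2) = ε / Real.sqrt (1 + ε^2) := by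
    simp only [h, Real.cos_pi_div_two]
    norm_num
  refine ⟨?_, ?_, hpi2⟩
  · simp only [h, Real.cos_zero]
    rw [show (1:ℝ) + 2*ε*1 + ε^2 = (1+ε)^2 by ring, Real.sqrt_sq (by linarith)]
    field_simp
    norm_num
  · intro θ hθ
    obtain ⟨h0, h1⟩ := hθ
    have hc0 : 0 ≤ Real.cos θ :=
      Real.cos_nonneg_of_mem_Icc ⟨by linarith [Real.pi_pos], h1⟩
    rw [hpi2]
    simp only [h]
    have hs0 : 0 < 1 + 2*ε*Real.cos θ + ε^2 := by nlinarith
    have hspos : 0 < Real.sqrt (1 + 2*ε*Real.cos θ + ε^2) := Real.sqrt_pos.mpr hs0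
    have hst : Real.sqrt (1+ε^2) ≤ Real.sqrt (1 + 2*ε*Real.cos θ + ε^2) :=
      Real.sqrt_le_sqrt (by nlinarith)
    have hA : (Real.cos θ + ε) / Real.sqrt (1 + 2*ε*Real.cos θ + ε^2)
        ≤ (Real.cos θ + ε) / Real.sqrt (1+ε^2) :=
      div_le_div_of_nonneg_left (by linarith) htpos hst
    have hB : (Real.cos θ + ε) / Real.sqrt (1+ε^2)
        = Real.cos θ / Real.sqrt (1+ε^2) + ε / Real.sqrt (1+ε^2) := by
      ring
    have hC : Real.cos θ / Real.sqrt (1+ε^2) ≤ Real.cos θ :=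
      div_le_self hc0 ht1
    linarith
end

section
/- Let τ_c > 0, Γ₀, Γ₁ > 0, γ ∈ ℂ \ {0}, and let the 3×3 matrix I_F = [[2τ_c²Γ₁|γ|², jτ_cΓ₁γ*, −jτ_cΓ₁γ], [jτ_cΓ₁γ*, 0, Γ₀+Γ₁], [−jτ_cΓ₁γ, Γ₀+Γ₁, 0]]. Then the (1,1) entry of I_F⁻¹ equals (Γ₀⁻¹ + Γ₁⁻¹)/(2τ_c²|γ|²). -/
open Matrix Complex

theorem crlb_closed_form
    (τc Γ0 Γ1 : ℝ) (hτc : 0 < τc) (hΓ0 : 0 < Γ0) (hΓ1 : 0 < Γ1)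
    (γ : ℂ) (hγ : γ ≠ 0) :
    let IF : Matrix (Fin 3) (Fin 3) ℂ :=
      Matrix.of ![![(2 * τc^2 * Γ1 * ‖γ‖ ^ 2 : ℂ),
                    Complex.I * τc * Γ1 * (starRingEnd ℂ) γ,
                    -Complex.I * τc * Γ1 * γ],
                  ![Complex.I * τc * Γ1 * (starRingEnd ℂ) γ, 0, ((Γ0 + Γ1 : ℝ) : ℂ)],
                  ![-Complex.I * τc * Γ1 * γ, ((Γ0 + Γ1 : ℝ) : ℂ), 0]]
    IF⁻¹ 0 0 = ((Γ0⁻¹ + Γ1⁻¹) / (2 * τc^2 * ‖γ‖ ^ 2) : ℂ) := by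
  intro IF
  have hm : (γ * (starRingEnd ℂ) γ : ℂ) = ((‖γ‖ : ℝ) : ℂ) ^ 2 := by
    rw [Complex.mul_conj]
    norm_cast
    exact (Complex.sq_norm γ).symm
  have habs : (0 : ℝ) < ‖γ‖ := norm_pos_iff.mpr hγ
  have hdet : IF.det = -(2 * τc^2 * Γ0 * Γ1 * (Γ0+Γ1) * ‖γ‖ ^ 2 : ℝ) := by
    show Matrix.det _ = _
    rw [Matrix.det_fin_three]
    show (2 * (τc:ℂ)^2 * Γ1 * ((‖γ‖:ℝ):ℂ) ^ 2) * 0 * 0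
        - (2 * (τc:ℂ)^2 * Γ1 * ((‖γ‖:ℝ):ℂ) ^ 2) * ((Γ0+Γ1:ℝ):ℂ) * ((Γ0+Γ1:ℝ):ℂ)
        - (Complex.I * τc * Γ1 * (starRingEnd ℂ) γ) * (Complex.I * τc * Γ1 * (starRingEnd ℂ) γ) * 0
        + (Complex.I * τc * Γ1 * (starRingEnd ℂ) γ) * ((Γ0+Γ1:ℝ):ℂ) * (-Complex.I * τc * Γ1 * γ)
        + (-Complex.I * τc * Γ1 * γ) * (Complex.I * τc * Γ1 * (starRingEnd ℂ) γ) * ((Γ0+Γ1:ℝ):ℂ)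
        - (-Complex.I * τc * Γ1 * γ) * 0 * (-Complex.I * τc * Γ1 * γ) = _
    rw [← hm]
    push_cast
    linear_combination (-2*(τc:ℂ)^2*Γ1^2*((Γ0:ℂ)+Γ1)*(γ * (starRingEnd ℂ) γ)) * Complex.I_sq + (-2*(τc:ℂ)^2*Γ1*(Γ0:ℂ)^2 - 2*(τc:ℂ)^2*Γ1^2*Γ0) * hm
  have hdet0 : IF.det ≠ 0 := by
    rw [hdet]
    have : (0:ℝ) < 2 * τc^2 * Γ0 * Γ1 * (Γ0+Γ1) * ‖γ‖ ^ 2 := by positivity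
    simpa using Complex.ofReal_ne_zero.mpr (ne_of_gt this)
  rw [Matrix.inv_def, Matrix.smul_apply]
  have hadj : IF.adjugate 0 0 = (-((Γ0+Γ1:ℝ)^2 : ℝ) : ℂ) := by
    show Matrix.adjugate _ 0 0 = _
    rw [Matrix.adjugate_fin_three]
    show (0 : ℂ) * 0 - ((Γ0 + Γ1 : ℝ) : ℂ) * ((Γ0 + Γ1 : ℝ) : ℂ) = _
    push_cast
    ring
  rw [hadj, hdet, smul_eq_mul, Ring.inverse_eq_inv]
  have hΓ0c : ((Γ0:ℝ):ℂ) ≠ 0 := Complex.ofReal_ne_zero.mpr (ne_of_gt hΓ0)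
  have hΓ1c : ((Γ1:ℝ):ℂ) ≠ 0 := Complex.ofReal_ne_zero.mpr (ne_of_gt hΓ1)
  have hτcc : ((τc:ℝ):ℂ) ≠ 0 := Complex.ofReal_ne_zero.mpr (ne_of_gt hτc)
  have habc : ((‖γ‖ : ℝ):ℂ) ≠ 0 := Complex.ofReal_ne_zero.mpr (ne_of_gt habs)
  have hsum : ((Γ0:ℂ) + Γ1) ≠ 0 := by
    have : (0:ℝ) < Γ0 + Γ1 := by linarith
    exact_mod_cast Complex.ofReal_ne_zero.mpr (ne_of_gt this)
  have hDne : (-((2 * τc^2 * Γ0 * Γ1 * (Γ0+Γ1) * ‖γ‖ ^ 2 : ℝ) : ℂ)) ≠ 0 := by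
    simp only [neg_ne_zero]
    exact Complex.ofReal_ne_zero.mpr (by positivity)
  have hEne : (2 * (τc:ℂ)^2 * ((‖γ‖ : ℝ):ℂ)^2) ≠ 0 :=
    mul_ne_zero (mul_ne_zero two_ne_zero (pow_ne_zero 2 hτcc)) (pow_ne_zero 2 habc)
  rw [inv_mul_eq_div, div_eq_div_iff hDne hEne]
  push_cast
  field_simp
  ring
end
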